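/- Let F_k : ℝᵈ → ℝ be differentiable with L-Lipschitz gradient, and let δ = (1/N)∑ᵢ g̃ᵢ with ⟨∇F_k(θ), g̃ᵢ⟩ ≥ 0 for all i. If either δ = 0 or 0 < η ≤ (2/(L‖δ‖²))·⟨∇F_k(θ), δ⟩, then F_k(θ - ηδ) ≤ F_k(θ). -/

import Mathlib

open RealInnerProductSpace

lemma line_hasDerivAt {d : ℕ} (F : EuclideanSpace ℝ (Fin d) → ℝ)
    (hdiff : Differentiable ℝ F) (x v : EuclideanSpace ℝ (Fin d)) (t : ℝ) :
    HasDerivAt (fun s : ℝ => F (x + s • v)) ⟪gradient F (x + t • v), v⟫ t := by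
  have h1 : HasDerivAt (fun s : ℝ => x + s • v) v t := by
    simpa using ((hasDerivAt_id t).smul_const v).const_add x
  have h2 := ((hdiff (x + t • v)).hasGradientAt).hasFDerivAt
  have := h2.comp_hasDerivAt t h1
  exact this.congr_deriv (by simp [InnerProductSpace.toDual_apply_apply])

lemma descent_lemma {d : ℕ} (F : EuclideanSpace ℝ (Fin d) → ℝ) (L : ℝ) (hL : 0 ≤ L)
    (hdiff : Differentiable ℝ F)
    (hLip : ∀ x y : EuclideanSpace ℝ (Fin d), ‖gradient F x - gradient F y‖ ≤ L * ‖x - y‖)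
    (x v : EuclideanSpace ℝ (Fin d)) :
    F (x + v) ≤ F x + ⟪gradient F x, v⟫ + L / 2 * ‖v‖ ^ 2 := by
  set φ : ℝ → ℝ := fun t => F (x + t • v) - t * ⟪gradient F x, v⟫ - L / 2 * t ^ 2 * ‖v‖ ^ 2
    with hφdef
  have hφ : ∀ t : ℝ, HasDerivAt φ
      (⟪gradient F (x + t • v), v⟫ - ⟪gradient F x, v⟫ - L * t * ‖v‖ ^ 2) t := by
    intro t
    have h1 := line_hasDerivAt F hdiff x v t
    have h2 : HasDerivAt (fun s : ℝ => s * ⟪gradient F x, v⟫) ⟪gradient F x, v⟫ t := by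
      simpa using (hasDerivAt_id t).mul_const (⟪gradient F x, v⟫ : ℝ)
    have h3 : HasDerivAt (fun s : ℝ => L / 2 * s ^ 2 * ‖v‖ ^ 2) (L * t * ‖v‖ ^ 2) t := by
      have := ((hasDerivAt_pow 2 t).const_mul (L / 2)).mul_const (‖v‖ ^ 2)
      refine this.congr_deriv ?_
      ring
    exact (h1.sub h2).sub h3
  have hmono : AntitoneOn φ (Set.Icc 0 1) := by
    apply antitoneOn_of_deriv_nonpos (convex_Icc 0 1)
    · exact (fun t _ => (hφ t).differentiableAt.continuousAt.continuousWithinAt)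
    · exact fun t _ => (hφ t).differentiableAt.differentiableWithinAt
    · intro t ht
      rw [interior_Icc] at ht
      rw [(hφ t).deriv]
      have hbound : ⟪gradient F (x + t • v), v⟫ - ⟪gradient F x, v⟫ ≤ L * t * ‖v‖ ^ 2 := by
        have h4 : ⟪gradient F (x + t • v) - gradient F x, v⟫ ≤
            ‖gradient F (x + t • v) - gradient F x‖ * ‖v‖ := real_inner_le_norm _ _
        have h5 : ‖gradient F (x + t • v) - gradient F x‖ ≤ L * (t * ‖v‖) := by
          have := hLip (x + t • v) x
          simpa [norm_smul, abs_of_pos ht.1, mul_assoc] using this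
        have h6 : ‖gradient F (x + t • v) - gradient F x‖ * ‖v‖ ≤ L * (t * ‖v‖) * ‖v‖ :=
          mul_le_mul_of_nonneg_right h5 (norm_nonneg v)
        calc ⟪gradient F (x + t • v), v⟫ - ⟪gradient F x, v⟫
            = ⟪gradient F (x + t • v) - gradient F x, v⟫ := by
              rw [inner_sub_left]
          _ ≤ L * (t * ‖v‖) * ‖v‖ := le_trans h4 h6
          _ = L * t * ‖v‖ ^ 2 := by ring
      linarith
  have hkey : φ 1 ≤ φ 0 := hmono (by norm_num) (by norm_num) zero_le_one
  simp only [hφdef, one_smul, zero_smul, add_zero, one_mul, one_pow, zero_pow, mul_zero,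
    zero_mul, sub_zero] at hkey
  linarith

/-- under the consensus condition, a sufficiently small step along the
average of modified gradients does not increase the client objective. -/
theorem consensus_step_decrease {d N : ℕ} (F : EuclideanSpace ℝ (Fin d) → ℝ) (L : ℝ)
    (hdiff : Differentiable ℝ F)
    (hLip : ∀ x y : EuclideanSpace ℝ (Fin d), ‖gradient F x - gradient F y‖ ≤ L * ‖x - y‖)
    (θ : EuclideanSpace ℝ (Fin d)) (gtilde : Fin N → EuclideanSpace ℝ (Fin d))
    (δ : EuclideanSpace ℝ (Fin d)) (hδ : δ = (1 / (N : ℝ)) • ∑ i : Fin N, gtilde i)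
    (hcons : ∀ i : Fin N, 0 ≤ ⟪gradient F θ, gtilde i⟫)
    (η : ℝ)
    (hη : δ = 0 ∨ (0 < η ∧ η ≤ (2 / (L * ‖δ‖ ^ 2)) * ⟪gradient F θ, δ⟫)) :
    F (θ - η • δ) ≤ F θ := by
  rcases hη with h0 | ⟨hηpos, hηle⟩
  · simp [h0]
  by_cases hδ0 : δ = 0
  · simp [hδ0]
  -- inner product of gradient with δ is nonneg
  have hinner : 0 ≤ ⟪gradient F θ, δ⟫ := by
    rw [hδ, real_inner_smul_right, inner_sum]
    have hN : (0:ℝ) ≤ 1 / (N : ℝ) := by positivity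
    exact mul_nonneg hN (Finset.sum_nonneg fun i _ => hcons i)
  have hL : 0 ≤ L := by
    have := hLip θ (θ + δ)
    have hpos : 0 < ‖θ - (θ + δ)‖ := by
      simpa [norm_pos_iff] using (neg_ne_zero.mpr hδ0)
    nlinarith [norm_nonneg (gradient F θ - gradient F (θ + δ))]
  have hδnorm : 0 < ‖δ‖ ^ 2 := pow_pos (norm_pos_iff.mpr hδ0) 2
  have hLpos : 0 < L * ‖δ‖ ^ 2 := by
    rcases lt_or_eq_of_le hL with h | h
    · positivity
    · exfalso
      rw [← h] at hηle
      simp at hηle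
      linarith
  have hstep : L / 2 * η * ‖δ‖ ^ 2 ≤ ⟪gradient F θ, δ⟫ := by
    rw [div_mul_eq_mul_div, le_div_iff₀ hLpos] at hηle
    nlinarith
  have := descent_lemma F L hL hdiff hLip θ (-(η • δ))
  have hrw : θ + -(η • δ) = θ - η • δ := by abel
  rw [hrw] at this
  have hin : ⟪gradient F θ, -(η • δ)⟫ = -(η * ⟪gradient F θ, δ⟫) := by
    rw [inner_neg_right, real_inner_smul_right]
  rw [hin, norm_neg, norm_smul, Real.norm_eq_abs, abs_of_pos hηpos] at this
  nlinarith [hstep, hηpos]
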